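/- Let K ⊂ Γ be compact, β ∈ (0, 1/√m] and M > 0. Then there exist constants c₀ > 0 and C₀ > 0, depending only on m, f, K, β and M, such that for every λ ∈ Γ with |λ_m| ≤ M and f_i(λ) ≥ β ∑_{j=1}^m f_j(λ) for every i = 1,…,m, every μ ∈ K with f(μ) ≥ f(λ), and every index r ∈ {1,…,m−1}: ∑_{1 ≤ i ≤ m−1, i ≠ r} f_i(λ)λ_i² ≥ c₀ ∑_{i=1}^{m−1} f_i(λ)λ_i² − C₀ ∑_{i=1}^m f_i(λ). -/

import Mathlib

open Filter Topology

/-- The `i`-th partial derivative `fᵢ(x) = ∂f/∂λᵢ(x)`. -/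
noncomputable def pd {m : ℕ} (f : (Fin m → ℝ) → ℝ) (x : Fin m → ℝ) (i : Fin m) : ℝ :=
  fderiv ℝ f x (Pi.single i 1)

/-- The Euclidean norm of a vector in `ℝ^m`. -/
noncomputable def eNorm {m : ℕ} (v : Fin m → ℝ) : ℝ :=
  Real.sqrt (∑ i, (v i) ^ 2)

/-- The unit normal `ν_x = Df(x)/|Df(x)|`. -/
noncomputable def nuv {m : ℕ} (f : (Fin m → ℝ) → ℝ) (x : Fin m → ℝ) : Fin m → ℝ :=
  fun i => pd f x i / eNorm (pd f x)



/-- linear map applied to a vector, expanded in coordinates -/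
lemma aux_clm_apply {m : ℕ} (L : (Fin m → ℝ) →L[ℝ] ℝ) (v : Fin m → ℝ) :
    L v = ∑ i, v i * L (Pi.single i 1) := by
  have hv : v = ∑ i, v i • (Pi.single i 1 : Fin m → ℝ) := by
    funext j
    simp [Finset.sum_apply, Pi.single_apply]
  conv_lhs => rw [hv]
  rw [map_sum]
  simp [smul_eq_mul]

/-- the gradient inequality for a concave function -/
lemma aux_concave_grad {m : ℕ} {Γ : Set (Fin m → ℝ)} {f : (Fin m → ℝ) → ℝ}
    (hΓconv : Convex ℝ Γ) (hf2 : ConcaveOn ℝ Γ f)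
    {lam μ : Fin m → ℝ} (hlam : lam ∈ Γ) (hμ : μ ∈ Γ)
    (hdiff : DifferentiableAt ℝ f lam) :
    f μ - f lam ≤ fderiv ℝ f lam (μ - lam) := by
  set L := fderiv ℝ f lam with hL
  set g : ℝ → ℝ := fun t => f (lam + t • (μ - lam)) with hg
  have hp : ∀ t ∈ Set.Icc (0:ℝ) 1, lam + t • (μ - lam) ∈ Γ := by
    intro t ht
    have h := hΓconv hlam hμ (by linarith [ht.2] : (0:ℝ) ≤ 1 - t) ht.1 (by ring)
    convert h using 1
    module
  have hcon : ConcaveOn ℝ (Set.Icc (0:ℝ) 1) g := by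
    refine ⟨convex_Icc _ _, fun x hx y hy a b ha hb hab => ?_⟩
    have h := hf2.2 (hp x hx) (hp y hy) ha hb hab
    simp only [hg, smul_eq_mul]
    simp only [smul_eq_mul] at h
    convert h using 2
    obtain rfl : a = 1 - b := by linarith
    module
  have hγ : HasDerivAt (fun t : ℝ => lam + t • (μ - lam)) (μ - lam) 0 := by
    simpa using ((hasDerivAt_id (0:ℝ)).smul_const (μ - lam)).const_add lam
  have hLd : HasFDerivAt f L ((fun t : ℝ => lam + t • (μ - lam)) 0) := by
    simpa using hdiff.hasFDerivAt
  have hgd : HasDerivAt g (L (μ - lam)) 0 := hLd.comp_hasDerivAt 0 hγ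
  have h := hcon.neg.le_slope_of_hasDerivAt (Set.mem_Icc.2 ⟨le_refl 0, zero_le_one⟩)
      (Set.mem_Icc.2 ⟨zero_le_one, le_refl 1⟩) zero_lt_one hgd.neg
  have hslope : slope (-g) 0 1 = -(g 1) + g 0 := by
    simp [slope_def_field]
  rw [hslope] at h
  have hg1 : g 1 = f μ := by simp [hg]
  have hg0 : g 0 = f lam := by simp [hg]
  rw [hg1, hg0] at h
  linarith

/-- On a symmetric open convex cone containing the positive cone, proper, the coordinate
sum is positive. -/
lemma aux_sum_pos {m : ℕ} (hm : 2 ≤ m) {Γ : Set (Fin m → ℝ)}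
    (hΓopen : IsOpen Γ) (hΓconv : Convex ℝ Γ)
    (hΓproper : Γ ≠ Set.univ)
    (hΓcone : ∀ t : ℝ, 0 < t → ∀ x ∈ Γ, t • x ∈ Γ)
    (hΓperm : ∀ π : Equiv.Perm (Fin m), ∀ x ∈ Γ, x ∘ π ∈ Γ)
    (hΓpos : {x : Fin m → ℝ | ∀ i, 0 < x i} ⊆ Γ)
    {lam : Fin m → ℝ} (hlam : lam ∈ Γ) : 0 < ∑ i, lam i := by
  haveI : NeZero m := ⟨by omega⟩
  by_contra hcon
  push_neg at hcon
  -- Γ is closed under addition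
  have hadd : ∀ x ∈ Γ, ∀ y ∈ Γ, x + y ∈ Γ := by
    intro x hx y hy
    have h2 := hΓconv hx hy (by norm_num : (0:ℝ) ≤ 1/2) (by norm_num : (0:ℝ) ≤ 1/2)
      (by norm_num)
    have h3 := hΓcone 2 (by norm_num) _ h2
    convert h3 using 1
    module
  set s : ℝ := (∑ i, lam i) / m with hs
  have hsle : s ≤ 0 := by apply div_nonpos_of_nonpos_of_nonneg hcon; positivity
  -- the constant vector with value s is in Γ
  have hv : (fun _ : Fin m => s) ∈ Γ := by
    have hmem : ∀ k ∈ (Finset.univ : Finset (Fin m)),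
        (lam ∘ (Equiv.addRight k : Equiv.Perm (Fin m))) ∈ Γ :=
      fun k _ => hΓperm _ _ hlam
    have hw : ∀ k ∈ (Finset.univ : Finset (Fin m)), (0:ℝ) ≤ (m:ℝ)⁻¹ :=
      fun _ _ => by positivity
    have hw1 : ∑ _k : Fin m, (m:ℝ)⁻¹ = 1 := by
      rw [Finset.sum_const, Finset.card_univ, Fintype.card_fin, nsmul_eq_mul]
      field_simp
    have h := hΓconv.sum_mem hw hw1 hmem
    convert h using 1
    funext i
    rw [Finset.sum_apply]
    simp only [Pi.smul_apply, Function.comp_apply, Equiv.coe_addRight, smul_eq_mul]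
    rw [← Finset.mul_sum]
    have : ∑ k : Fin m, lam (i + k) = ∑ j, lam j :=
      Fintype.sum_equiv (Equiv.addLeft i) _ _ (fun k => by simp)
    rw [this, hs]
    ring
  -- a strictly negative constant vector is in Γ
  obtain ⟨ε, hε, hball⟩ := Metric.isOpen_iff.1 hΓopen _ hv
  set w : Fin m → ℝ := fun _ => s - ε/2 with hwdef
  have hwΓ : w ∈ Γ := by
    apply hball
    rw [Metric.mem_ball, dist_eq_norm]
    have : w - (fun _ : Fin m => s) = fun _ : Fin m => -(ε/2) := by
      funext i; simp [hwdef]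
    rw [this]
    have : ‖(fun _ : Fin m => -(ε/2))‖ = ε/2 := by
      rw [pi_norm_const (-(ε/2))]
      rw [Real.norm_eq_abs, abs_neg, abs_of_pos (by linarith)]
    rw [this]; linarith
  -- every vector is in Γ
  apply hΓproper
  ext x
  simp only [Set.mem_univ, iff_true]
  have hc : (0:ℝ) < ε/2 - s := by linarith
  set t : ℝ := (‖x‖ + 1) / (ε/2 - s) with ht
  have htpos : 0 < t := by positivity
  have hxw : x - t • w ∈ Γ := by
    apply hΓpos
    intro i
    simp only [Set.mem_setOf_eq, Pi.sub_apply, Pi.smul_apply, hwdef, smul_eq_mul]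
    have h1 : t * (ε/2 - s) = ‖x‖ + 1 := by
      rw [ht, div_mul_cancel₀ _ (ne_of_gt hc)]
    have h2 : -‖x‖ ≤ x i := by
      have := norm_le_pi_norm x i
      rw [Real.norm_eq_abs] at this
      cases abs_le.1 this with
      | intro h _ => linarith
    nlinarith
  have := hadd _ hxw _ (hΓcone t htpos _ hwΓ)
  convert this using 1
  module

set_option maxHeartbeats 1600000 in
/-- inequality (6.8): for compact `K ⊂ Γ`, `β ∈ (0, 1/√m]` and `M > 0`
there are `c₀, C₀ > 0` such that for all `λ ∈ Γ` with `|λ_m| ≤ M` and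
`fᵢ(λ) ≥ β ∑ⱼ fⱼ(λ)` for every `i`, all `μ ∈ K` with `f(μ) ≥ f(λ)`, and any index
`r ∈ {1,…,m-1}`: `∑_{i<m, i≠r} fᵢλᵢ² ≥ c₀ ∑_{i<m} fᵢλᵢ² - C₀ ∑ᵢ fᵢ`. -/
theorem stmt_6 (m : ℕ) (hm : 2 ≤ m)
    (Γ : Set (Fin m → ℝ)) (f : (Fin m → ℝ) → ℝ)
    (hΓopen : IsOpen Γ) (hΓconv : Convex ℝ Γ) (hΓne : Γ.Nonempty)
    (hΓproper : Γ ≠ Set.univ)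
    (hΓcone : ∀ t : ℝ, 0 < t → ∀ x ∈ Γ, t • x ∈ Γ)
    (hΓperm : ∀ π : Equiv.Perm (Fin m), ∀ x ∈ Γ, x ∘ π ∈ Γ)
    (hΓpos : {x : Fin m → ℝ | ∀ i, 0 < x i} ⊆ Γ)
    (hfsmooth : ContDiffOn ℝ (⊤ : ℕ∞) f Γ)
    (hfsymm : ∀ π : Equiv.Perm (Fin m), ∀ x ∈ Γ, f (x ∘ π) = f x)
    (hf1 : ∀ x ∈ Γ, ∀ i, 0 < pd f x i)
    (hf2 : ConcaveOn ℝ Γ f)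
    (K : Set (Fin m → ℝ)) (hK : IsCompact K) (hKΓ : K ⊆ Γ)
    (β : ℝ) (hβ : 0 < β) (hβ' : β ≤ 1 / Real.sqrt m)
    (M : ℝ) (hM : 0 < M) :
    ∃ c₀ : ℝ, 0 < c₀ ∧ ∃ C₀ : ℝ, 0 < C₀ ∧
      ∀ lam ∈ Γ, |lam (⟨m - 1, by omega⟩ : Fin m)| ≤ M →
      (∀ i, β * ∑ j, pd f lam j ≤ pd f lam i) →
      ∀ μ ∈ K, f lam ≤ f μ →
      ∀ r : Fin m, (r : ℕ) < m - 1 →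
      ∑ i ∈ Finset.univ.filter (fun i : Fin m => (i : ℕ) < m - 1 ∧ i ≠ r),
            pd f lam i * (lam i) ^ 2
        ≥ c₀ * ∑ i ∈ Finset.univ.filter (fun i : Fin m => (i : ℕ) < m - 1),
              pd f lam i * (lam i) ^ 2
          - C₀ * ∑ i, pd f lam i := by
  -- a bound for K
  obtain ⟨R0, hR0⟩ := hK.isBounded.subset_closedBall 0
  set R : ℝ := max R0 1 with hRdef
  have hRpos : (0:ℝ) < R := lt_of_lt_of_le one_pos (le_max_right _ _)
  have hRK : ∀ μ ∈ K, ∀ i, |μ i| ≤ R := by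
    intro μ hμ i
    have h1 : ‖μ‖ ≤ R0 := by
      have := hR0 hμ
      rwa [Metric.mem_closedBall, dist_zero_right] at this
    have h2 := norm_le_pi_norm μ i
    rw [Real.norm_eq_abs] at h2
    exact h2.trans (h1.trans (le_max_left _ _))
  have hβ1 : β ≤ 1 := by
    refine hβ'.trans ?_
    rw [div_le_one (Real.sqrt_pos.2 (by positivity))]
    have h1 : Real.sqrt 1 ≤ Real.sqrt m := Real.sqrt_le_sqrt (by exact_mod_cast Nat.one_le_of_lt hm)
    simpa using h1
  have hD : (0:ℝ) < β^3 + 2*m := by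
    have h1 : (0:ℝ) < β^3 := by positivity
    have h2 : (0:ℝ) ≤ 2*(m:ℝ) := by positivity
    linarith
  refine ⟨β^3/(β^3 + 2*m), by positivity, 2*(R+M)^2*β/(β^3 + 2*m), ?_, ?_⟩
  · apply div_pos _ hD
    have : (0:ℝ) < R + M := by linarith
    positivity
  intro lam hlam hlamM hβf μ hμ hfμ r hr
  set F : Fin m → ℝ := pd f lam with hF
  set T : ℝ := ∑ i, F i with hT
  have hFpos : ∀ i, 0 < F i := hf1 lam hlam
  have hTpos : 0 < T := Finset.sum_pos (fun i _ => hFpos i) ⟨r, Finset.mem_univ r⟩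
  have hFleT : ∀ i, F i ≤ T :=
    fun i => Finset.single_le_sum (fun j _ => (hFpos j).le) (Finset.mem_univ i)
  set last : Fin m := ⟨m - 1, by omega⟩ with hlast
  have hlamM' : |lam last| ≤ M := hlamM
  have hrlast : r ≠ last := by
    intro h
    rw [h] at hr
    simp only [hlast] at hr
    omega
  set P := Finset.univ.filter (fun i : Fin m => (i : ℕ) < m - 1 ∧ i ≠ r) with hP
  have hrP : r ∉ P := by simp [hP]
  have hlastP : last ∉ P := by
    simp only [hP, Finset.mem_filter, Finset.mem_univ, true_and, not_and]
    intro h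
    exfalso
    have : (last : ℕ) = m - 1 := rfl
    omega
  have hsplit : ∀ g : Fin m → ℝ, ∑ i, g i = g r + g last + ∑ i ∈ P, g i := by
    intro g
    have huniv : (Finset.univ : Finset (Fin m)) = insert r (insert last P) := by
      ext i
      simp only [Finset.mem_univ, Finset.mem_insert, hP, Finset.mem_filter, true_and, true_iff]
      rcases eq_or_ne i r with h | h
      · exact Or.inl h
      right
      rcases eq_or_ne i last with h2 | h2
      · exact Or.inl h2
      · refine Or.inr ⟨?_, h⟩
        have h3 := i.isLt
        have h4 : (i : ℕ) ≠ m - 1 := by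
          intro hc
          exact h2 (Fin.val_injective (by rw [hc] : (i:ℕ) = (last:ℕ)))
        omega
    rw [huniv, Finset.sum_insert (by simp [Finset.mem_insert, hrlast, hrP]),
      Finset.sum_insert hlastP]
    ring
  have hPf : Finset.univ.filter (fun i : Fin m => (i : ℕ) < m - 1) = insert r P := by
    ext i
    simp only [Finset.mem_filter, Finset.mem_univ, true_and, Finset.mem_insert, hP]
    constructor
    · intro h
      rcases eq_or_ne i r with h1 | h1
      · exact Or.inl h1
      · exact Or.inr ⟨h, h1⟩
    · rintro (rfl | ⟨h, _⟩)
      · exact hr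
      · exact h
  set A := ∑ i ∈ P, F i * lam i ^ 2 with hA
  set A' := ∑ i ∈ P, lam i ^ 2 with hA'
  set σ := ∑ i ∈ P, |lam i| with hσ
  have hA'0 : 0 ≤ A' := Finset.sum_nonneg fun i _ => sq_nonneg _
  have hA0 : 0 ≤ A := Finset.sum_nonneg fun i _ => mul_nonneg (hFpos i).le (sq_nonneg _)
  have hσ0 : 0 ≤ σ := Finset.sum_nonneg fun i _ => abs_nonneg _
  have hAA' : β * T * A' ≤ A := by
    rw [hA, hA', Finset.mul_sum]
    exact Finset.sum_le_sum fun i _ =>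
      mul_le_mul_of_nonneg_right (hβf i) (sq_nonneg _)
  have hσA : σ ^ 2 ≤ m * A' := by
    have h1 : σ ^ 2 ≤ (P.card : ℝ) * ∑ i ∈ P, |lam i| ^ 2 := by
      rw [hσ]; exact sq_sum_le_card_mul_sum_sq
    have h2 : ∑ i ∈ P, |lam i| ^ 2 = A' := by
      rw [hA']; exact Finset.sum_congr rfl fun i _ => sq_abs _
    have h3 : (P.card : ℝ) ≤ m := by
      have := Finset.card_le_univ P
      simp only [Finset.card_univ, Fintype.card_fin] at this
      exact_mod_cast this
    calc σ ^ 2 ≤ (P.card : ℝ) * A' := by rw [← h2]; exact h1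
      _ ≤ m * A' := mul_le_mul_of_nonneg_right h3 hA'0
  -- positivity of the coordinate sum
  have hsumpos := aux_sum_pos hm hΓopen hΓconv hΓproper hΓcone hΓperm hΓpos hlam
  have h3 : -lam r ≤ M + σ := by
    have h := hsumpos
    rw [hsplit lam] at h
    have h1 : lam last ≤ M := le_of_abs_le hlamM'
    have h2 : ∑ i ∈ P, lam i ≤ σ := Finset.sum_le_sum fun i _ => le_abs_self _
    linarith
  -- gradient inequality
  have hdiff : DifferentiableAt ℝ f lam :=
    (hfsmooth.contDiffAt (hΓopen.mem_nhds hlam)).differentiableAt (by simp)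
  have hgrad := aux_concave_grad hΓconv hf2 hlam (hKΓ hμ) hdiff
  have hgrad2 : f μ - f lam ≤ ∑ i, (μ i - lam i) * F i := by
    refine hgrad.trans (le_of_eq ?_)
    rw [aux_clm_apply]
    exact Finset.sum_congr rfl fun i _ => by rw [hF]; rfl
  have hgl : ∑ i, F i * lam i ≤ R * T := by
    have h0 : 0 ≤ ∑ i, (μ i - lam i) * F i := le_trans (by linarith) hgrad2
    have hdist : ∑ i, (μ i - lam i) * F i = ∑ i, F i * μ i - ∑ i, F i * lam i := by
      rw [← Finset.sum_sub_distrib]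
      exact Finset.sum_congr rfl fun i _ => by ring
    have h1 : ∑ i, F i * lam i ≤ ∑ i, F i * μ i := by
      rw [hdist] at h0; linarith
    have h2 : ∑ i, F i * μ i ≤ ∑ i, F i * R := by
      refine Finset.sum_le_sum fun i _ => ?_
      exact mul_le_mul_of_nonneg_left
        ((le_abs_self _).trans (hRK μ hμ i)) (hFpos i).le
    have h3 : ∑ i, F i * R = R * T := by
      rw [hT, Finset.mul_sum]
      exact Finset.sum_congr rfl fun i _ => by ring
    rw [← h3]
    exact h1.trans h2
  -- upper bound on F r * lam r
  have h5 : F r * lam r ≤ R * T + T * M + T * σ := by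
    have hsp := hsplit (fun i => F i * lam i)
    have hlast' : -(F last * lam last) ≤ T * M := by
      have h1 : -lam last ≤ M := by
        have := abs_le.1 hlamM'
        linarith [this.1]
      nlinarith [hFpos last, hFleT last, hM.le]
    have hPneg : -(T * σ) ≤ ∑ i ∈ P, F i * lam i := by
      rw [hσ, Finset.mul_sum, ← Finset.sum_neg_distrib]
      refine Finset.sum_le_sum fun i _ => ?_
      nlinarith [hFpos i, hFleT i, neg_abs_le (lam i), abs_nonneg (lam i)]
    have := hgl
    rw [hsp] at this
    linarith
  -- bound on β * |lam r|
  have h6 : β * |lam r| ≤ R + M + σ := by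
    rcases le_or_gt 0 (lam r) with h | h
    · rw [abs_of_nonneg h]
      have hb : β * T * lam r ≤ F r * lam r :=
        mul_le_mul_of_nonneg_right (hβf r) h
      nlinarith [hTpos]
    · rw [abs_of_neg h]
      have h1 : β * -lam r ≤ 1 * -lam r :=
        mul_le_mul_of_nonneg_right hβ1 (by linarith)
      linarith
  -- squared bound
  have s5 : β^2 * lam r ^ 2 ≤ 2*(R+M)^2 + 2*(m * A') := by
    have s2 : (β * |lam r|)^2 ≤ (R + M + σ)^2 := by
      apply pow_le_pow_left₀ (by positivity) h6
    have s3 : (R + M + σ)^2 ≤ 2*(R+M)^2 + 2*σ^2 := by nlinarith [sq_nonneg (R + M - σ)]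
    have s4 : (β * |lam r|)^2 = β^2 * lam r ^ 2 := by
      rw [mul_pow, sq_abs]
    nlinarith [hσA]
  -- key estimate
  have hkey : β^3 * (F r * lam r ^ 2) ≤ 2*m*A + 2*(R+M)^2*β*T := by
    have s6 : β*T*(β^2 * lam r ^ 2) ≤ β*T*(2*(R+M)^2 + 2*(m * A')) :=
      mul_le_mul_of_nonneg_left s5 (by positivity)
    nlinarith [hAA', mul_nonneg (mul_nonneg (pow_nonneg hβ.le 3)
      (sub_nonneg.2 (hFleT r))) (sq_nonneg (lam r)), hTpos, hβ.le]
  -- conclusion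
  rw [hPf, Finset.sum_insert hrP]
  have hrw : β^3/(β^3 + 2*m) * (F r * lam r ^ 2 + A) - 2*(R+M)^2*β/(β^3 + 2*m) * T
      = (β^3 * (F r * lam r ^ 2 + A) - 2*(R+M)^2*β*T) / (β^3 + 2*m) := by
    field_simp
  rw [ge_iff_le, hrw, div_le_iff₀ hD]
  nlinarith [hkey, hA0, hD]
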